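/- There exist positive real numbers α′_+, α″_+, α′_−, α″_−, Q and an integer K ≥ 1 such that for every k ≥ K: Q^{−1} λ^{−S(k)·α″_+} ≤ |h(A_k^+)| ≤ Q λ^{−S(k)·α′_+} and Q^{−1} λ^{−S(k)·α″_−} ≤ |h(A_k^−)| ≤ Q λ^{−S(k)·α′_−}. -/

import Mathlib

open MeasureTheory Filter Set

set_option maxHeartbeats 1000000

lemma my_deriv_bounds (f f' : ℝ → ℝ) (a b m C : ℝ) (hab : a ≤ b) (hm0 : 0 ≤ m)
    (hf : ∀ x ∈ Set.Icc a b, HasDerivWithinAt f (f' x) (Set.Icc a b) x)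
    (hm : ∀ x ∈ Set.Icc a b, m ≤ f' x) (hC : ∀ x ∈ Set.Icc a b, f' x ≤ C) :
    m * (b - a) ≤ f b - f a ∧ f b - f a ≤ C * (b - a) := by
  have ha : a ∈ Set.Icc a b := ⟨le_refl a, hab⟩
  have hb : b ∈ Set.Icc a b := ⟨hab, le_refl b⟩
  have hmc : m ≤ C := le_trans (hm a ha) (hC a ha)
  have hupper := Convex.norm_image_sub_le_of_norm_hasDerivWithin_le hf
    (fun x hx => by rw [Real.norm_eq_abs, abs_of_nonneg (hm0.trans (hm x hx))]; exact hC x hx)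
    (convex_Icc a b) ha hb
  rw [Real.norm_eq_abs, Real.norm_eq_abs, abs_of_nonneg (by linarith : (0:ℝ) ≤ b - a)] at hupper
  have hup : f b - f a ≤ C * (b - a) := le_trans (le_abs_self _) hupper
  have hg : ∀ x ∈ Set.Icc a b, HasDerivWithinAt (fun y => C * y - f y) (C - f' x) (Set.Icc a b) x := by
    intro x hx
    exact (by simpa using ((hasDerivWithinAt_id x (Set.Icc a b)).const_mul C).sub (hf x hx) :
      HasDerivWithinAt ((fun y => C * y) - f) (C - f' x) (Set.Icc a b) x)
  have hlow := Convex.norm_image_sub_le_of_norm_hasDerivWithin_le (C := C - m) hg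
    (fun x hx => by
      rw [Real.norm_eq_abs, abs_le]
      have h1 := hm x hx
      have h2 := hC x hx
      constructor <;> linarith)
    (convex_Icc a b) ha hb
  rw [Real.norm_eq_abs, Real.norm_eq_abs, abs_of_nonneg (by linarith : (0:ℝ) ≤ b - a)] at hlow
  have := le_abs_self ((C * b - f b) - (C * a - f a))
  constructor
  · nlinarith [hlow, this]
  · exact hup

noncomputable def intervalLength (A : Set ℝ) : ℝ := (MeasureTheory.volume A).toReal

theorem length_of_image_annuli
    (lam : ℝ) (hlam1 : 1 < lam) (hlam2 : lam ≤ 2)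
    (T : ℝ → ℝ) (hT : ∀ x : ℝ, T x = lam * (1 - |x|) - 1)
    (c : ℕ → ℝ) (hc : ∀ i : ℕ, c i = T^[i] 0)
    (S : ℤ → ℕ) (hSm2 : S (-2) = 0) (hSm1 : S (-1) = 1)
    (hSrec : ∀ k : ℤ, 0 ≤ k → S k = S (k - 1) + S (k - 2))
    (hcne : ∀ j : ℕ, 1 ≤ j → c j ≠ 0)
    (hc2neg : c 2 < 0) (hc1pos : 0 < c 1)
    (hsame : ∀ k : ℤ, 2 ≤ k → ∀ j : ℕ, 1 ≤ j → j < S (k - 2) →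
      (0 < c (S (k - 1) + j) ↔ 0 < c j))
    (hopp : ∀ k : ℤ, 2 ≤ k → (0 < c (S k) ↔ c (S (k - 2)) < 0))
    (hdec : ∀ k : ℤ, 0 ≤ k → |c (S (k + 1))| < |c (S k)|)
    (hc34 : |c 3| < |c 4|)
    (h : ℝ → ℝ) (h' : ℝ → ℝ) (hinv : ℝ → ℝ)
    (hmono : StrictMonoOn h (Set.Icc (-1 : ℝ) 1))
    (hbij : Set.BijOn h (Set.Icc (-1 : ℝ) 1) (Set.Icc (-1 : ℝ) 1))
    (hhd : ∀ x ∈ Set.Icc (-1 : ℝ) 1, HasDerivWithinAt h (h' x) (Set.Icc (-1 : ℝ) 1) x)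
    (hC1 : ContinuousOn h' (Set.Icc (-1 : ℝ) 1))
    (hinvl : ∀ x ∈ Set.Icc (-1 : ℝ) 1, hinv (h x) = x)
    (hinvr : ∀ y ∈ Set.Icc (-1 : ℝ) 1, h (hinv y) = y)
    (h'ne : ∀ x ∈ Set.Icc (-1 : ℝ) 1, x ≠ 0 → h' x ≠ 0)
    (h'0 : h' 0 = 0)
    (αp αm M δ : ℝ) (hαp : 0 < αp) (hαm : 0 < αm) (hM : 0 < M)
    (hδ : 0 < δ) (hδ1 : δ ≤ 1)
    (hnfp : ∀ x ∈ Set.Ioo (0 : ℝ) δ,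
      Real.exp (-M) * x ^ αp ≤ h' x ∧ h' x ≤ Real.exp M * x ^ αp)
    (hnfm : ∀ x ∈ Set.Ioo (-δ) (0 : ℝ),
      Real.exp (-M) * |x| ^ αm ≤ h' x ∧ h' x ≤ Real.exp M * |x| ^ αm) :
    ∃ α'p α''p α'm α''m Q : ℝ, ∃ K : ℕ,
      0 < α'p ∧ 0 < α''p ∧ 0 < α'm ∧ 0 < α''m ∧ 0 < Q ∧ 1 ≤ K ∧
      ∀ k : ℤ, (K : ℤ) ≤ k →
        (Q⁻¹ * lam ^ (-(S k : ℝ) * α''p)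
            ≤ intervalLength (h '' (Set.Ioo (0 : ℝ) |c (S k)| \ closure (Set.Ioo (0 : ℝ) |c (S (k + 1))|))) ∧
          intervalLength (h '' (Set.Ioo (0 : ℝ) |c (S k)| \ closure (Set.Ioo (0 : ℝ) |c (S (k + 1))|))) ≤ Q * lam ^ (-(S k : ℝ) * α'p)) ∧
        (Q⁻¹ * lam ^ (-(S k : ℝ) * α''m)
            ≤ intervalLength (h '' (Set.Ioo (-|c (S k)|) (0 : ℝ) \ closure (Set.Ioo (-|c (S (k + 1))|) (0 : ℝ)))) ∧
          intervalLength (h '' (Set.Ioo (-|c (S k)|) (0 : ℝ) \ closure (Set.Ioo (-|c (S (k + 1))|) (0 : ℝ)))) ≤ Q * lam ^ (-(S k : ℝ) * α'm)) := by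
  have hlam0 : (0:ℝ) < lam := by linarith
  -- basic S facts
  have hS0 : S 0 = 1 := by
    have := hSrec 0 le_rfl
    norm_num at this
    rw [this, hSm1, hSm2]
  have hS1v : S 1 = 2 := by
    have := hSrec 1 (by norm_num)
    norm_num at this
    rw [this, hS0, hSm1]
  have hS1 : ∀ k : ℤ, -1 ≤ k → 1 ≤ S k := by
    refine Int.le_induction (by rw [hSm1]) ?_
    intro k hk ih
    have e := hSrec (k+1) (by omega)
    have e1 : k + 1 - 1 = k := by ring
    rw [e1] at e
    omega
  have hSmono : ∀ k : ℤ, -1 ≤ k → S k ≤ S (k+1) := by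
    intro k hk
    have e := hSrec (k+1) (by omega)
    have e1 : k + 1 - 1 = k := by ring
    rw [e1] at e
    omega
  have hSk : ∀ k : ℤ, 1 ≤ k → k + 1 ≤ (S k : ℤ) := by
    refine Int.le_induction (by rw [hS1v]; norm_num) ?_
    intro k hk ih
    have e := hSrec (k+1) (by omega)
    have e1 : k + 1 - 1 = k := by ring
    rw [e1] at e
    have h1 : 1 ≤ S (k+1-2) := hS1 _ (by omega)
    omega
  have hS2 : ∀ k : ℤ, 0 ≤ k → S (k+1) ≤ 2 * S k := by
    intro k hk
    have e := hSrec (k+1) (by omega)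
    have e1 : k + 1 - 1 = k := by ring
    rw [e1] at e
    have h1 : S (k+1-2) ≤ S k := by
      have := hSmono (k-1) (by omega)
      have e2 : k + 1 - 2 = k - 1 := by ring
      have e3 : k - 1 + 1 = k := by ring
      rw [e3] at this
      rw [e2]
      exact this
    omega
  -- c basics
  have hc0 : c 0 = 0 := by rw [hc]; rfl
  have hcsucc : ∀ i : ℕ, c (i+1) = T (c i) := by
    intro i
    rw [hc, hc, Function.iterate_succ_apply']
  have hcIcc : ∀ i : ℕ, -1 ≤ c i ∧ c i ≤ 1 := by
    intro i
    induction i with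
    | zero => rw [hc0]; norm_num
    | succ i ih =>
      rw [hcsucc i, hT]
      have h1 : |c i| ≤ 1 := abs_le.mpr ih
      have h2 : 0 ≤ |c i| := abs_nonneg _
      constructor <;> nlinarith
  have hstep : ∀ a b : ℝ, (0 ≤ a ∧ 0 ≤ b ∨ a ≤ 0 ∧ b ≤ 0) → |T a - T b| = lam * |a - b| := by
    intro a b hside
    have hd : T a - T b = lam * (|b| - |a|) := by rw [hT, hT]; ring
    rw [hd, abs_mul, abs_of_pos hlam0]
    congr 1
    rcases hside with ⟨ha, hb⟩ | ⟨ha, hb⟩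
    · rw [abs_of_nonneg ha, abs_of_nonneg hb, abs_sub_comm]
    · rw [abs_of_nonpos ha, abs_of_nonpos hb]
      rw [show -b - -a = a - b by ring]
  have xpos : ∀ k : ℤ, -1 ≤ k → 0 < |c (S k)| := by
    intro k hk
    exact abs_pos.mpr (hcne _ (hS1 k hk))
  have xle1 : ∀ i : ℕ, |c i| ≤ 1 := fun i => abs_le.mpr (hcIcc i)
  -- key identity
  have hid : ∀ k : ℤ, 2 ≤ k →
      |c (S (k-2))| + |c (S k)| = lam ^ (S (k-2)) * |c (S (k-1))| := by
    intro k hk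
    have haux : ∀ j : ℕ, j ≤ S (k-2) →
        |c j - c (S (k-1) + j)| = lam ^ j * |c (S (k-1))| := by
      intro j
      induction j with
      | zero => intro _; simp [hc0]
      | succ j ih =>
        intro hj1
        have hjm : j < S (k-2) := by omega
        have hrec := ih (le_of_lt hjm)
        have e2 : c (S (k-1) + (j+1)) = T (c (S (k-1) + j)) := by
          rw [show S (k-1) + (j+1) = (S (k-1) + j) + 1 from rfl, hcsucc]
        have hside : 0 ≤ c j ∧ 0 ≤ c (S (k-1) + j) ∨ c j ≤ 0 ∧ c (S (k-1) + j) ≤ 0 := by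
          rcases Nat.eq_zero_or_pos j with h0 | h1
          · subst h0
            rcases le_total 0 (c (S (k-1) + 0)) with hb | hb
            · exact Or.inl ⟨le_of_eq hc0.symm, hb⟩
            · exact Or.inr ⟨le_of_eq hc0, hb⟩
          · have hiff := hsame k hk j h1 hjm
            by_cases hcj : 0 < c j
            · exact Or.inl ⟨hcj.le, (hiff.mpr hcj).le⟩
            · exact Or.inr ⟨le_of_not_gt hcj, le_of_not_gt (fun hh => hcj (hiff.mp hh))⟩
        rw [hcsucc j, e2, hstep _ _ hside, hrec, pow_succ]
        ring
    have hfin := haux (S (k-2)) le_rfl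
    have hSkk : S (k-1) + S (k-2) = S k := (hSrec k (by omega)).symm
    rw [hSkk] at hfin
    have hne1 : c (S k) ≠ 0 := hcne _ (hS1 k (by omega))
    have hne2 : c (S (k-2)) ≠ 0 := hcne _ (hS1 (k-2) (by omega))
    by_cases hpos : 0 < c (S k)
    · have hneg : c (S (k-2)) < 0 := (hopp k hk).mp hpos
      rw [abs_of_neg (by linarith : c (S (k-2)) - c (S k) < 0)] at hfin
      rw [abs_of_neg hneg, abs_of_pos hpos]
      linarith
    · have hneg : c (S k) < 0 := lt_of_le_of_ne (le_of_not_gt hpos) hne1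
      have hpos2 : 0 < c (S (k-2)) := by
        rcases lt_trichotomy (c (S (k-2))) 0 with hh | hh | hh
        · exact absurd ((hopp k hk).mpr hh) hpos
        · exact absurd hh hne2
        · exact hh
      rw [abs_of_pos (by linarith : 0 < c (S (k-2)) - c (S k))] at hfin
      rw [abs_of_pos hpos2, abs_of_neg hneg]
      linarith
  -- derived inequalities
  have hD1 : ∀ k : ℤ, 1 ≤ k → |c (S (k-1))| ≤ lam ^ (S (k-1)) * |c (S k)| := by
    intro k hk
    have := hid (k+1) (by omega)
    have e1 : k + 1 - 2 = k - 1 := by ring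
    have e2 : k + 1 - 1 = k := by ring
    rw [e1, e2] at this
    have h0 : 0 ≤ |c (S (k+1))| := abs_nonneg _
    linarith
  have hD2 : ∀ k : ℤ, 1 ≤ k → |c (S (k+1))| * (lam ^ (S k) - 1) < |c (S k)| := by
    intro k hk
    have hi := hid (k+2) (by omega)
    have e1 : k + 2 - 2 = k := by ring
    have e2 : k + 2 - 1 = k + 1 := by ring
    rw [e1, e2] at hi
    have hd := hdec (k+1) (by omega)
    have e3 : k + 1 + 1 = k + 2 := by ring
    rw [e3] at hd
    nlinarith
  have hLB : ∀ k : ℤ, 1 ≤ k → |c (S 1)| * (lam ^ (S (k+1)))⁻¹ ≤ |c (S k)| := by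
    refine Int.le_induction ?_ ?_
    · have h1 : (1:ℝ) ≤ lam ^ (S (1+1)) := one_le_pow₀ hlam1.le
      have h2 : (lam ^ (S (1+1)))⁻¹ ≤ 1 := inv_le_one_of_one_le₀ h1
      have h3 : 0 ≤ |c (S 1)| := abs_nonneg _
      nlinarith
    · intro k hk ih
      have hd1 := hD1 (k+1) (by omega)
      have e1 : k + 1 - 1 = k := by ring
      rw [e1] at hd1
      have hy : (0:ℝ) < lam ^ (S k) := pow_pos hlam0 _
      have hy1 : (0:ℝ) < lam ^ (S (k+1)) := pow_pos hlam0 _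
      have hrw : (lam ^ (S (k+1+1)))⁻¹ = (lam ^ (S (k+1)))⁻¹ * (lam ^ (S k))⁻¹ := by
        have : S (k+1+1) = S (k+1) + S k := by
          have := hSrec (k+2) (by omega)
          have e2 : k + 2 - 1 = k + 1 := by ring
          have e3 : k + 2 - 2 = k := by ring
          have e4 : k + 1 + 1 = k + 2 := by ring
          rw [e2, e3] at this
          rw [e4, this]
        rw [this, pow_add, mul_inv]
      rw [hrw, ← mul_assoc]
      have step1 : |c (S 1)| * (lam ^ (S (k+1)))⁻¹ * (lam ^ (S k))⁻¹ ≤ |c (S k)| * (lam ^ (S k))⁻¹ :=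
        mul_le_mul_of_nonneg_right ih (by positivity)
      refine step1.trans ?_
      rw [mul_inv_le_iff₀ hy]
      linarith [hd1, mul_comm (lam ^ (S k)) (|c (S (k+1))|)]
  have hUB : ∀ k : ℤ, 1 ≤ k → 3 ≤ lam ^ (S k) → |c (S (k+1))| ≤ (3/2) * (lam ^ (S k))⁻¹ := by
    intro k hk h3
    have hd2 := hD2 k hk
    have hy : (0:ℝ) < lam ^ (S k) := pow_pos hlam0 _
    have hb1 : |c (S k)| ≤ 1 := xle1 _
    have ha0 : 0 ≤ |c (S (k+1))| := abs_nonneg _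
    rw [show (3/2 : ℝ) * (lam ^ (S k))⁻¹ = (3/2) / (lam ^ (S k)) by ring, le_div_iff₀ hy]
    nlinarith
  -- analysis helpers
  have hcont : ContinuousOn h (Set.Icc (-1:ℝ) 1) := fun x hx => (hhd x hx).continuousWithinAt
  have hlen : ∀ p q mlo mhi : ℝ, -1 ≤ p → p < q → q ≤ 1 → 0 ≤ mlo →
      (∀ x ∈ Set.Icc p q, mlo ≤ h' x ∧ h' x ≤ mhi) →
      mlo * (q - p) ≤ intervalLength (h '' Set.Ioo p q) ∧
        intervalLength (h '' Set.Ioo p q) ≤ mhi * (q - p) := by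
    intro p q mlo mhi hp1 hpq hq1 hmlo hbd
    have hpI : p ∈ Set.Icc (-1:ℝ) 1 := ⟨hp1, by linarith⟩
    have hqI : q ∈ Set.Icc (-1:ℝ) 1 := ⟨by linarith, hq1⟩
    have hsub : Set.Icc p q ⊆ Set.Icc (-1:ℝ) 1 := Set.Icc_subset_Icc hp1 hq1
    have himg : h '' Set.Ioo p q = Set.Ioo (h p) (h q) := by
      apply Set.Subset.antisymm
      · rintro y ⟨z, hz, rfl⟩
        have hzI : z ∈ Set.Icc (-1:ℝ) 1 := ⟨by linarith [hz.1], by linarith [hz.2]⟩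
        exact ⟨hmono hpI hzI hz.1, hmono hzI hqI hz.2⟩
      · exact intermediate_value_Ioo hpq.le (hcont.mono hsub)
    have hbd2 := my_deriv_bounds h h' p q mlo mhi hpq.le hmlo
      (fun x hx => (hhd x (hsub hx)).mono hsub)
      (fun x hx => (hbd x hx).1) (fun x hx => (hbd x hx).2)
    have hmlt : h p < h q := hmono hpI hqI hpq
    rw [himg]
    unfold intervalLength
    rw [Real.volume_Ioo, ENNReal.toReal_ofReal (by linarith)]
    exact hbd2
  -- thresholds and constants
  obtain ⟨N, hN⟩ := pow_unbounded_of_one_lt (max 3 (3 / (2 * δ))) hlam1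
  have hNpow : ∀ n : ℕ, N ≤ n → max 3 (3 / (2 * δ)) < lam ^ n :=
    fun n hn => hN.trans_le (pow_le_pow_right₀ hlam1.le hn)
  have hx1pos : 0 < |c (S 1)| := xpos 1 (by norm_num)
  have hx1le : |c (S 1)| ≤ 1 := xle1 _
  set x1 : ℝ := |c (S 1)| with hx1def
  have hcPpos : 0 < Real.exp M * (3/2 : ℝ) ^ (αp+1) :=
    mul_pos (Real.exp_pos _) (Real.rpow_pos_of_pos (by norm_num) _)
  have hcMpos : 0 < Real.exp M * (3/2 : ℝ) ^ (αm+1) :=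
    mul_pos (Real.exp_pos _) (Real.rpow_pos_of_pos (by norm_num) _)
  have hdPpos : 0 < Real.exp (-M) * x1 ^ αp * (x1/2) :=
    mul_pos (mul_pos (Real.exp_pos _) (Real.rpow_pos_of_pos hx1pos _)) (by linarith)
  have hdMpos : 0 < Real.exp (-M) * x1 ^ αm * (x1/2) :=
    mul_pos (mul_pos (Real.exp_pos _) (Real.rpow_pos_of_pos hx1pos _)) (by linarith)
  set Q : ℝ := max (max (Real.exp M * (3/2 : ℝ) ^ (αp+1)) (Real.exp M * (3/2 : ℝ) ^ (αm+1)))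
      (max (Real.exp (-M) * x1 ^ αp * (x1/2))⁻¹ (Real.exp (-M) * x1 ^ αm * (x1/2))⁻¹) with hQdef
  have hQpos : 0 < Q := lt_of_lt_of_le hcPpos ((le_max_left _ _).trans (le_max_left _ _))
  have hQcP : Real.exp M * (3/2 : ℝ) ^ (αp+1) ≤ Q := (le_max_left _ _).trans (le_max_left _ _)
  have hQcM : Real.exp M * (3/2 : ℝ) ^ (αm+1) ≤ Q := (le_max_right _ _).trans (le_max_left _ _)
  have hQdP : (Real.exp (-M) * x1 ^ αp * (x1/2))⁻¹ ≤ Q := (le_max_left _ _).trans (le_max_right _ _)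
  have hQdM : (Real.exp (-M) * x1 ^ αm * (x1/2))⁻¹ ≤ Q := (le_max_right _ _).trans (le_max_right _ _)
  refine ⟨(αp+1)/2, 4*αp+2, (αm+1)/2, 4*αm+2, Q, N+3, by linarith, by linarith, by linarith,
    by linarith, hQpos, by omega, ?_⟩
  intro k hk
  have hk1 : 1 ≤ k := by push_cast at hk; omega
  have hk2 : 2 ≤ k := by push_cast at hk; omega
  have hkm : 1 ≤ k - 1 := by push_cast at hk; omega
  have hSkN : N ≤ S k := by
    have h1 := hSk k hk1
    push_cast at hk
    omega
  have hSkN' : N ≤ S (k-1) := by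
    have h1 := hSk (k-1) hkm
    rw [show k - 1 + 1 = k by ring] at h1
    push_cast at hk
    omega
  have h3y : 3 ≤ lam ^ (S k) := le_of_lt (lt_of_le_of_lt (le_max_left _ _) (hNpow _ hSkN))
  have h3y' : 3 ≤ lam ^ (S (k-1)) := le_of_lt (lt_of_le_of_lt (le_max_left _ _) (hNpow _ hSkN'))
  have hdy' : 3 / (2*δ) < lam ^ (S (k-1)) := lt_of_le_of_lt (le_max_right _ _) (hNpow _ hSkN')
  have ha0 : 0 < |c (S (k+1))| := xpos (k+1) (by omega)
  have hb0 : 0 < |c (S k)| := xpos k (by omega)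
  have hy : (0:ℝ) < lam ^ (S k) := pow_pos hlam0 _
  have hy' : (0:ℝ) < lam ^ (S (k-1)) := pow_pos hlam0 _
  have heqp : Set.Ioo (0:ℝ) |c (S k)| \ closure (Set.Ioo (0:ℝ) |c (S (k+1))|)
      = Set.Ioo |c (S (k+1))| |c (S k)| := by
    rw [closure_Ioo ha0.ne]
    ext t
    simp only [Set.mem_diff, Set.mem_Ioo, Set.mem_Icc, not_and, not_le]
    constructor
    · rintro ⟨⟨h1, h2⟩, h3⟩
      exact ⟨h3 h1.le, h2⟩
    · rintro ⟨h1, h2⟩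
      exact ⟨⟨ha0.trans h1, h2⟩, fun _ => h1⟩
  have heqm : Set.Ioo (-|c (S k)|) (0:ℝ) \ closure (Set.Ioo (-|c (S (k+1))|) (0:ℝ))
      = Set.Ioo (-|c (S k)|) (-|c (S (k+1))|) := by
    have hne : -|c (S (k+1))| ≠ (0:ℝ) := ne_of_lt (by linarith)
    rw [closure_Ioo hne]
    ext t
    simp only [Set.mem_diff, Set.mem_Ioo, Set.mem_Icc, not_and, not_le]
    constructor
    · rintro ⟨⟨h1, h2⟩, h3⟩
      refine ⟨h1, ?_⟩
      by_contra hh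
      push_neg at hh
      exact absurd (h3 hh) (not_lt.mpr h2.le)
    · rintro ⟨h1, h2⟩
      exact ⟨⟨h1, by linarith⟩, fun hx => absurd hx (not_le.mpr h2)⟩
  rw [heqp, heqm]
  set a : ℝ := |c (S (k+1))| with hadef
  set b : ℝ := |c (S k)| with hbdef
  have hab : a < b := hdec k (by omega)
  have hb1 : b ≤ 1 := xle1 _
  have hbub : b ≤ (3/2) * (lam ^ (S (k-1)))⁻¹ := by
    have h1 := hUB (k-1) hkm h3y'
    rw [show k - 1 + 1 = k by ring] at h1
    exact h1
  have hbδ : b < δ := by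
    have h1 : 3 < lam ^ (S (k-1)) * (2*δ) := (div_lt_iff₀ (by positivity)).mp hdy'
    have h2 : (3/2) * (lam ^ (S (k-1)))⁻¹ < δ := by
      rw [show (3/2:ℝ) * (lam ^ (S (k-1)))⁻¹ = (3/2) / (lam ^ (S (k-1))) by ring,
        div_lt_iff₀ hy']
      linarith
    linarith
  have hgap : b / 2 ≤ b - a := by
    have hd2 := hD2 k hk1
    nlinarith [mul_nonneg ha0.le (by linarith : (0:ℝ) ≤ lam ^ (S k) - 3)]
  have halb : x1 * (lam ^ (S (k+2)))⁻¹ ≤ a := by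
    have h1 := hLB (k+1) (by omega)
    rw [show k + 1 + 1 = k + 2 by ring] at h1
    exact h1
  have hblb : x1 * (lam ^ (S (k+1)))⁻¹ ≤ b := hLB k hk1
  have hpow2 : lam ^ (S (k+1)) ≤ (lam ^ (S k))^2 := by
    rw [← pow_mul]
    exact pow_le_pow_right₀ hlam1.le (by have := hS2 k (by omega); omega)
  have hpow4 : lam ^ (S (k+2)) ≤ (lam ^ (S k))^4 := by
    rw [← pow_mul]
    apply pow_le_pow_right₀ hlam1.le
    have h1 := hS2 k (by omega)
    have h2 := hS2 (k+1) (by omega)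
    rw [show k+1+1 = k+2 by ring] at h2
    omega
  have hpowhalf : lam ^ (S k) ≤ (lam ^ (S (k-1)))^2 := by
    rw [← pow_mul]
    apply pow_le_pow_right₀ hlam1.le
    have h1 := hS2 (k-1) (by omega)
    rw [show k-1+1 = k by ring] at h1
    omega
  have hA4 : x1 * ((lam ^ (S k))^4)⁻¹ ≤ a :=
    le_trans (mul_le_mul_of_nonneg_left
      (inv_anti₀ (pow_pos hlam0 _) hpow4) hx1pos.le) halb
  have hB2 : x1 * ((lam ^ (S k))^2)⁻¹ ≤ b :=
    le_trans (mul_le_mul_of_nonneg_left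
      (inv_anti₀ (pow_pos hlam0 _) hpow2) hx1pos.le) hblb
  have hconv : ∀ r : ℝ, lam ^ (-(S k : ℝ) * r) = (lam ^ (S k) : ℝ) ^ (-r) := by
    intro r
    have h1 : ((lam ^ (S k) : ℝ)) ^ (-r) = lam ^ ((S k : ℝ) * (-r)) := by
      rw [← Real.rpow_natCast lam (S k), ← Real.rpow_mul hlam0.le]
    rw [h1]
    congr 1
    ring
  have p4 : ((lam ^ (S k) : ℝ))^(4:ℕ) = (lam ^ (S k) : ℝ) ^ ((4:ℝ)) := by
    rw [← Real.rpow_natCast (lam ^ (S k)) 4]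
    norm_num
  have p2 : ((lam ^ (S k) : ℝ))^(2:ℕ) = (lam ^ (S k) : ℝ) ^ ((2:ℝ)) := by
    rw [← Real.rpow_natCast (lam ^ (S k)) 2]
    norm_num
  have hfinal : ∀ α L : ℝ, 0 < α →
      Real.exp (-M) * a ^ α * (b - a) ≤ L → L ≤ Real.exp M * b ^ α * (b - a) →
      (Real.exp (-M) * x1 ^ α * (x1/2))⁻¹ ≤ Q → Real.exp M * (3/2 : ℝ) ^ (α+1) ≤ Q →
      0 < Real.exp (-M) * x1 ^ α * (x1/2) →
      Q⁻¹ * lam ^ (-(S k : ℝ) * (4*α+2)) ≤ L ∧ L ≤ Q * lam ^ (-(S k : ℝ) * ((α+1)/2)) := by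
    intro α L hα hL1 hL2 hQd hQc hdpos
    constructor
    · -- lower bound
      have e4 : (((lam ^ (S k))^4 : ℝ))⁻¹ ^ α = (lam ^ (S k) : ℝ) ^ (-(4*α)) := by
        rw [p4, ← Real.rpow_neg hy.le, ← Real.rpow_mul hy.le]
        congr 1
        ring
      have e2 : (((lam ^ (S k))^2 : ℝ))⁻¹ = (lam ^ (S k) : ℝ) ^ (-(2:ℝ)) := by
        rw [p2, ← Real.rpow_neg hy.le]
      have t1 : (x1 * ((lam ^ (S k))^4)⁻¹) ^ α ≤ a ^ α :=
        Real.rpow_le_rpow (mul_nonneg hx1pos.le (inv_nonneg.mpr (pow_nonneg hy.le _)))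
          hA4 hα.le
      have t2 : (x1 * ((lam ^ (S k))^2)⁻¹)/2 ≤ b - a := by
        have := hB2
        linarith
      have step1 : Real.exp (-M) * (x1 * ((lam ^ (S k))^4)⁻¹) ^ α *
          ((x1 * ((lam ^ (S k))^2)⁻¹)/2) ≤ Real.exp (-M) * a ^ α * (b - a) := by
        apply mul_le_mul (mul_le_mul_of_nonneg_left t1 (Real.exp_nonneg _)) t2
        · have h0 : (0:ℝ) ≤ x1 * ((lam ^ (S k))^2)⁻¹ :=
            mul_nonneg hx1pos.le (inv_nonneg.mpr (pow_nonneg hy.le _))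
          linarith
        · exact mul_nonneg (Real.exp_nonneg _) (Real.rpow_nonneg ha0.le _)
      have eqL : Real.exp (-M) * (x1 * ((lam ^ (S k))^4)⁻¹) ^ α *
          ((x1 * ((lam ^ (S k))^2)⁻¹)/2)
          = (Real.exp (-M) * x1 ^ α * (x1/2)) * (lam ^ (S k) : ℝ) ^ (-(4*α+2)) := by
        rw [Real.mul_rpow hx1pos.le (inv_nonneg.mpr (pow_nonneg hy.le _)), e4, e2,
          show -(4*α+2) = (-(4*α)) + (-(2:ℝ)) by ring, Real.rpow_add hy]
        ring
      have hQinv : Q⁻¹ ≤ Real.exp (-M) * x1 ^ α * (x1/2) := by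
        have h1 := inv_anti₀ (inv_pos.mpr hdpos) hQd
        rwa [inv_inv] at h1
      rw [hconv]
      calc Q⁻¹ * (lam ^ (S k) : ℝ) ^ (-(4*α+2))
          ≤ (Real.exp (-M) * x1 ^ α * (x1/2)) * (lam ^ (S k) : ℝ) ^ (-(4*α+2)) :=
            mul_le_mul_of_nonneg_right hQinv (Real.rpow_nonneg hy.le _)
        _ = Real.exp (-M) * (x1 * ((lam ^ (S k))^4)⁻¹) ^ α *
            ((x1 * ((lam ^ (S k))^2)⁻¹)/2) := eqL.symm
        _ ≤ Real.exp (-M) * a ^ α * (b - a) := step1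
        _ ≤ L := hL1
    · -- upper bound
      rw [hconv]
      have u1 : L ≤ Real.exp M * b ^ (α+1) := by
        refine hL2.trans ?_
        rw [Real.rpow_add_one hb0.ne' α, ← mul_assoc]
        exact mul_le_mul_of_nonneg_left (by linarith : b - a ≤ b)
          (mul_nonneg (Real.exp_nonneg _) (Real.rpow_nonneg hb0.le _))
      have p2' : ((lam ^ (S (k-1)) : ℝ))^(2:ℕ) = (lam ^ (S (k-1)) : ℝ) ^ ((2:ℝ)) := by
        rw [← Real.rpow_natCast (lam ^ (S (k-1))) 2]
        norm_num
      have hyhalf : (lam ^ (S k) : ℝ) ^ ((1:ℝ)/2) ≤ lam ^ (S (k-1)) := by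
        have h4 : (lam ^ (S k) : ℝ) ^ ((1:ℝ)/2) ≤ (((lam ^ (S (k-1)))^2 : ℝ)) ^ ((1:ℝ)/2) :=
          Real.rpow_le_rpow hy.le hpowhalf (by norm_num)
        have h5 : (((lam ^ (S (k-1)))^2 : ℝ)) ^ ((1:ℝ)/2) = lam ^ (S (k-1)) := by
          rw [p2', ← Real.rpow_mul hy'.le]
          norm_num
        linarith
      have h6 : b ≤ (3/2) * (lam ^ (S k) : ℝ) ^ (-((1:ℝ)/2)) := by
        rw [Real.rpow_neg hy.le]
        refine hbub.trans (mul_le_mul_of_nonneg_left ?_ (by norm_num))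
        exact inv_anti₀ (Real.rpow_pos_of_pos hy _) hyhalf
      have u2 : b ^ (α+1) ≤ (3/2:ℝ) ^ (α+1) * (lam ^ (S k) : ℝ) ^ (-((α+1)/2)) := by
        calc b ^ (α+1) ≤ ((3/2) * (lam ^ (S k) : ℝ) ^ (-((1:ℝ)/2))) ^ (α+1) :=
              Real.rpow_le_rpow hb0.le h6 (by linarith)
          _ = (3/2:ℝ) ^ (α+1) * (lam ^ (S k) : ℝ) ^ (-((α+1)/2)) := by
              rw [Real.mul_rpow (by norm_num) (Real.rpow_nonneg hy.le _),
                ← Real.rpow_mul hy.le]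
              congr 1
              ring
      calc L ≤ Real.exp M * b ^ (α+1) := u1
        _ ≤ Real.exp M * ((3/2:ℝ) ^ (α+1) * (lam ^ (S k) : ℝ) ^ (-((α+1)/2))) :=
            mul_le_mul_of_nonneg_left u2 (Real.exp_nonneg _)
        _ = (Real.exp M * (3/2:ℝ) ^ (α+1)) * (lam ^ (S k) : ℝ) ^ (-((α+1)/2)) := by ring
        _ ≤ Q * (lam ^ (S k) : ℝ) ^ (-((α+1)/2)) :=
            mul_le_mul_of_nonneg_right hQc (Real.rpow_nonneg hy.le _)
  have hIp : ∀ x ∈ Set.Icc a b, Real.exp (-M) * a ^ αp ≤ h' x ∧ h' x ≤ Real.exp M * b ^ αp := by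
    intro x hx
    have hx0 : 0 < x := lt_of_lt_of_le ha0 hx.1
    have hxδ : x < δ := lt_of_le_of_lt hx.2 hbδ
    obtain ⟨hl, hr⟩ := hnfp x ⟨hx0, hxδ⟩
    constructor
    · exact le_trans (mul_le_mul_of_nonneg_left
        (Real.rpow_le_rpow ha0.le hx.1 hαp.le) (Real.exp_nonneg _)) hl
    · exact hr.trans (mul_le_mul_of_nonneg_left
        (Real.rpow_le_rpow hx0.le hx.2 hαp.le) (Real.exp_nonneg _))
  have hLp := hlen a b _ _ (by linarith) hab hb1
    (mul_nonneg (Real.exp_nonneg _) (Real.rpow_nonneg ha0.le _)) hIp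
  have hIm : ∀ x ∈ Set.Icc (-b) (-a),
      Real.exp (-M) * a ^ αm ≤ h' x ∧ h' x ≤ Real.exp M * b ^ αm := by
    intro x hx
    have hx0 : x < 0 := lt_of_le_of_lt hx.2 (by linarith)
    have hxδ : -δ < x := lt_of_lt_of_le (by linarith) hx.1
    obtain ⟨hl, hr⟩ := hnfm x ⟨hxδ, hx0⟩
    have habs1 : a ≤ |x| := by
      rw [abs_of_neg hx0]
      linarith [hx.2]
    have habs2 : |x| ≤ b := by
      rw [abs_of_neg hx0]
      linarith [hx.1]
    constructor
    · exact le_trans (mul_le_mul_of_nonneg_left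
        (Real.rpow_le_rpow ha0.le habs1 hαm.le) (Real.exp_nonneg _)) hl
    · exact hr.trans (mul_le_mul_of_nonneg_left
        (Real.rpow_le_rpow (abs_nonneg x) habs2 hαm.le) (Real.exp_nonneg _))
  have hLm := hlen (-b) (-a) _ _ (by linarith) (by linarith) (by linarith)
    (mul_nonneg (Real.exp_nonneg _) (Real.rpow_nonneg ha0.le _)) hIm
  rw [show (-a : ℝ) - (-b) = b - a by ring] at hLm
  exact ⟨hfinal αp _ hαp hLp.1 hLp.2 hQdP hQcP hdPpos,
    hfinal αm _ hαm hLm.1 hLm.2 hQdM hQcM hdMpos⟩
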